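/- Let R be a ring of positive characteristic and k a natural number. If an element x ∈ R can be written as a sum of k pairwise commuting periodic elements of R, then x itself is periodic. -/

import Mathlib

/-- An element of a ring is periodic if `x ^ n = x ^ m` for some `n > m ≥ 1`. -/
def IsPeriodicElem {R : Type*} [Ring R] (x : R) : Prop :=
  ∃ n m : ℕ, 1 ≤ m ∧ m < n ∧ x ^ n = x ^ m

-- reduction of exponents
lemma pow_reduce {A : Type*} [Ring A] {y : A} {N M : ℕ} (_hM : 1 ≤ M) (hMN : M < N)
    (h : y ^ N = y ^ M) : ∀ a, ∃ b ≤ N, y ^ a = y ^ b := by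
  intro a
  induction a using Nat.strong_induction_on with
  | _ a ih =>
    by_cases ha : a ≤ N
    · exact ⟨a, ha, rfl⟩
    · push_neg at ha
      obtain ⟨t, rfl⟩ : ∃ t, a = N + t := ⟨a - N, by omega⟩
      have : y ^ (N + t) = y ^ (M + t) := by rw [pow_add, pow_add, h]
      obtain ⟨b, hb, hb2⟩ := ih (M + t) (by omega)
      exact ⟨b, hb, this.trans hb2⟩

lemma aux_comm {A : Type*} [CommRing A] (n : ℕ) (hn : 0 < n) [CharP A n]
    (k : ℕ) (f : Fin k → A) (hper : ∀ i, IsPeriodicElem (f i)) :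
    IsPeriodicElem (∑ i, f i) := by
  haveI : NeZero n := ⟨hn.ne'⟩
  choose N M hM hMN hpow using hper
  have hred : ∀ i a, ∃ b ≤ N i, f i ^ a = f i ^ b := fun i =>
    pow_reduce (hM i) (hMN i) (hpow i)
  set x : A := ∑ i, f i with hx
  set Mon : Set A := Set.range (fun a : Fin k → ℕ => ∏ i, f i ^ a i) with hMon
  -- Mon is finite
  have hMonfin : Mon.Finite := by
    have : Mon ⊆ Set.range (fun c : (∀ i, Fin (N i + 1)) => ∏ i, f i ^ (c i : ℕ)) := by
      rintro _ ⟨a, rfl⟩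
      choose b hb hb2 using fun i => hred i (a i)
      refine ⟨fun i => ⟨b i, Nat.lt_succ_of_le (hb i)⟩, ?_⟩
      simp only
      exact Finset.prod_congr rfl fun i _ => (hb2 i).symm
    exact (Set.finite_range _).subset this
  -- all powers of x lie in the additive closure of Mon
  have hmem : ∀ m, x ^ m ∈ AddSubmonoid.closure Mon := by
    intro m
    induction m with
    | zero =>
      refine AddSubmonoid.subset_closure ⟨fun _ => 0, ?_⟩
      simp
    | succ m ih =>
      have key : ∀ i, ∀ y ∈ AddSubmonoid.closure Mon,
          y * f i ∈ AddSubmonoid.closure Mon := by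
        intro i y hy
        induction hy using AddSubmonoid.closure_induction with
        | mem z hz =>
          obtain ⟨a, rfl⟩ := hz
          refine AddSubmonoid.subset_closure
            ⟨fun j => a j + if j = i then 1 else 0, ?_⟩
          simp only [pow_add]
          rw [Finset.prod_mul_distrib]
          congr 1
          rw [show f i = ∏ j, f j ^ (if j = i then 1 else 0) from ?_]
          rw [Finset.prod_congr rfl (fun j _ => show f j ^ (if j = i then 1 else 0)
            = if j = i then f j else 1 by split <;> simp)]
          simp
        | zero => simpa using AddSubmonoid.zero_mem _
        | add a b _ _ ha hb => rw [add_mul]; exact AddSubmonoid.add_mem _ ha hb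
      rw [pow_succ, hx, Finset.mul_sum]
      exact AddSubmonoid.sum_mem _ fun i _ => key i _ (hx ▸ ih)
  -- pass to ZMod n module
  letI := (ZMod.algebra A n).toModule
  set V := Submodule.span (ZMod n) Mon with hV
  have hsub : ∀ m, x ^ m ∈ V := by
    intro m
    have : AddSubmonoid.closure Mon ≤ V.toAddSubmonoid :=
      AddSubmonoid.closure_le.mpr Submodule.subset_span
    exact this (hmem m)
  haveI : Module.Finite (ZMod n) V := Module.Finite.span_of_finite _ hMonfin
  haveI : Finite V := Module.finite_of_finite (ZMod n)
  obtain ⟨a, b, hab, he⟩ := Finite.exists_ne_map_eq_of_infinite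
    (fun m : ℕ => (⟨x ^ (m + 1), hsub (m + 1)⟩ : V))
  have he' : x ^ (a + 1) = x ^ (b + 1) := congrArg Subtype.val he
  rcases lt_or_gt_of_ne hab with h | h
  · exact ⟨b + 1, a + 1, by omega, by omega, he'.symm⟩
  · exact ⟨a + 1, b + 1, by omega, by omega, he'⟩
theorem sum_commuting_periodic {R : Type*} [Ring R] (n : ℕ) (hn : 0 < n)
    (hchar : CharP R n) (k : ℕ) (f : Fin k → R)
    (hper : ∀ i, IsPeriodicElem (f i))
    (hcomm : ∀ i j, f i * f j = f j * f i)
    (x : R) (hx : x = ∑ i, f i) :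
    IsPeriodicElem x := by
  haveI := hchar
  set S : Subring R := Subring.closure (Set.range f) with hS
  letI : CommRing S := Subring.closureCommRingOfComm (by
    rintro a ⟨i, rfl⟩ b ⟨j, rfl⟩; exact hcomm i j)
  haveI : CharP S n := CharP.subring R n S
  set g : Fin k → S := fun i => ⟨f i, Subring.subset_closure ⟨i, rfl⟩⟩ with hg
  have hper' : ∀ i, IsPeriodicElem (g i) := by
    intro i
    obtain ⟨a, b, hb, hab, he⟩ := hper i
    exact ⟨a, b, hb, hab, Subtype.ext (by push_cast; exact he)⟩
  obtain ⟨a, b, hb, hab, he⟩ := aux_comm n hn k g hper'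
  refine ⟨a, b, hb, hab, ?_⟩
  have hxg : x = ((∑ i, g i : S) : R) := by
    rw [hx]; push_cast; rfl
  rw [hxg]
  have := congrArg (Subtype.val) he
  push_cast at this
  push_cast
  exact this
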